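/- arXiv:2010.04213 — 2 statements merged into one kernel-verified Lean document; each statement's English description precedes it below -/
import Mathlib

section
/- Assume Σ is reachable from x* and controllable to x*, and that Σ is cyclo-lossless with respect to x* (every trajectory beginning and ending at x* has zero supply). Then F_ac(x) = F_rc(x) for all states x, and the storage function is unique up to an additive constant: any two storage functions F₁, F₂ satisfy F₁ − F₂ = const. -/
open MeasureTheory

section Glue

variable {E : Type*} [NormedAddCommGroup E] [NormedSpace ℝ E]
variable {g₁ g₂ : ℝ → E} (G : ℝ → E) {a b c d δ : ℝ}

lemma glue_ii (hab : a ≤ b) (hcd : c ≤ d) (hδ : b = c + δ)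
    (h₁ : IntervalIntegrable g₁ volume a b)
    (h₂ : IntervalIntegrable g₂ volume c d)
    (hG₁ : ∀ t ≤ b, G t = g₁ t) (hG₂ : ∀ t, b < t → G t = g₂ (t - δ)) :
    IntervalIntegrable G volume a (d + δ) := by
  have hbe : b ≤ d + δ := by rw [hδ]; linarith
  have H₁ : IntervalIntegrable G volume a b := by
    rw [intervalIntegrable_iff] at h₁ ⊢
    refine h₁.congr_fun (fun t ht => ?_) measurableSet_uIoc
    rw [Set.uIoc_of_le hab] at ht
    exact (hG₁ t ht.2).symm
  have H₂ : IntervalIntegrable G volume b (d + δ) := by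
    have h₂' := h₂.comp_sub_right δ
    rw [← hδ] at h₂'
    rw [intervalIntegrable_iff] at h₂' ⊢
    refine h₂'.congr_fun (fun t ht => ?_) measurableSet_uIoc
    rw [Set.uIoc_of_le hbe] at ht
    exact (hG₂ t ht.1).symm
  exact H₁.trans H₂

lemma glue_int (hab : a ≤ b) (hcd : c ≤ d) (hδ : b = c + δ)
    (h₁ : IntervalIntegrable g₁ volume a b)
    (h₂ : IntervalIntegrable g₂ volume c d)
    (hG₁ : ∀ t ≤ b, G t = g₁ t) (hG₂ : ∀ t, b < t → G t = g₂ (t - δ)) :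
    ∫ t in a..(d + δ), G t = (∫ t in a..b, g₁ t) + ∫ t in c..d, g₂ t := by
  have hbe : b ≤ d + δ := by rw [hδ]; linarith
  have H₁ : IntervalIntegrable G volume a b := by
    rw [intervalIntegrable_iff] at h₁ ⊢
    refine h₁.congr_fun (fun t ht => ?_) measurableSet_uIoc
    rw [Set.uIoc_of_le hab] at ht
    exact (hG₁ t ht.2).symm
  have h₂' := h₂.comp_sub_right δ
  rw [← hδ] at h₂'
  have H₂ : IntervalIntegrable G volume b (d + δ) := by
    rw [intervalIntegrable_iff] at h₂' ⊢
    refine h₂'.congr_fun (fun t ht => ?_) measurableSet_uIoc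
    rw [Set.uIoc_of_le hbe] at ht
    exact (hG₂ t ht.1).symm
  rw [← intervalIntegral.integral_add_adjacent_intervals H₁ H₂]
  congr 1
  · exact intervalIntegral.integral_congr (fun t ht => by
      rw [Set.uIcc_of_le hab] at ht
      exact hG₁ t ht.2)
  · have e1 : ∫ t in b..(d + δ), G t = ∫ t in b..(d + δ), g₂ (t - δ) := by
      refine intervalIntegral.integral_congr_ae (Filter.Eventually.of_forall fun t ht => ?_)
      rw [Set.uIoc_of_le hbe] at ht
      exact hG₂ t ht.1
    rw [e1, intervalIntegral.integral_comp_sub_right, hδ]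
    norm_num

end Glue

/-- A trajectory of the control system `ẋ = f(x,u)` with supply rate `s`,
on an interval `[t₁, t₂]`. -/
structure Traj {n m : ℕ} (f : (Fin n → ℝ) → (Fin m → ℝ) → (Fin n → ℝ))
    (s : (Fin n → ℝ) → (Fin m → ℝ) → ℝ) where
  t₁ : ℝ
  t₂ : ℝ
  hle : t₁ ≤ t₂
  x : ℝ → Fin n → ℝ
  u : ℝ → Fin m → ℝ
  hu : Measurable u
  hx : Continuous x
  hf : IntervalIntegrable (fun t => f (x t) (u t)) volume t₁ t₂
  hs : IntervalIntegrable (fun t => s (x t) (u t)) volume t₁ t₂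
  hdyn : ∀ t ∈ Set.Icc t₁ t₂, x t = x t₁ + ∫ τ in t₁..t, f (x τ) (u τ)

/-- The supply of a trajectory. -/
noncomputable def Traj.supply {n m : ℕ} {f : (Fin n → ℝ) → (Fin m → ℝ) → (Fin n → ℝ)}
    {s : (Fin n → ℝ) → (Fin m → ℝ) → ℝ} (T : Traj f s) : ℝ :=
  ∫ t in T.t₁..T.t₂, s (T.x t) (T.u t)

lemma Traj.concat {n m : ℕ} {f : (Fin n → ℝ) → (Fin m → ℝ) → (Fin n → ℝ)}
    {s : (Fin n → ℝ) → (Fin m → ℝ) → ℝ} (T₁ T₂ : Traj f s)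
    (h : T₁.x T₁.t₂ = T₂.x T₂.t₁) :
    ∃ T : Traj f s, T.x T.t₁ = T₁.x T₁.t₁ ∧ T.x T.t₂ = T₂.x T₂.t₂ ∧
      T.supply = T₁.supply + T₂.supply := by
  classical
  obtain ⟨a, b, hab, x₁, u₁, hu₁, hx₁, hf₁, hs₁, hdyn₁⟩ := T₁
  obtain ⟨c, d, hcd, x₂, u₂, hu₂, hx₂, hf₂, hs₂, hdyn₂⟩ := T₂
  simp only at h ⊢
  set δ : ℝ := b - c with hδdef
  have hδ : b = c + δ := by ring
  set X : ℝ → Fin n → ℝ := fun t => if t ≤ b then x₁ t else x₂ (t - δ) with hX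
  set U : ℝ → Fin m → ℝ := fun t => if t ≤ b then u₁ t else u₂ (t - δ) with hU
  have hbe : b ≤ d + δ := by rw [hδ]; linarith
  have hX₁ : ∀ t ≤ b, X t = x₁ t := fun t ht => if_pos ht
  have hX₂ : ∀ t, b < t → X t = x₂ (t - δ) := fun t ht => if_neg (not_le.2 ht)
  have hU₁ : ∀ t ≤ b, U t = u₁ t := fun t ht => if_pos ht
  have hU₂ : ∀ t, b < t → U t = u₂ (t - δ) := fun t ht => if_neg (not_le.2 ht)
  have hbc : b - δ = c := by ring
  have hbnd : x₁ b = x₂ (b - δ) := by rw [hbc]; exact h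
  have hGf₁ : ∀ t ≤ b, f (X t) (U t) = f (x₁ t) (u₁ t) := fun t ht => by
    rw [hX₁ t ht, hU₁ t ht]
  have hGf₂ : ∀ t, b < t → f (X t) (U t) = f (x₂ (t - δ)) (u₂ (t - δ)) := fun t ht => by
    rw [hX₂ t ht, hU₂ t ht]
  have hGs₁ : ∀ t ≤ b, s (X t) (U t) = s (x₁ t) (u₁ t) := fun t ht => by
    rw [hX₁ t ht, hU₁ t ht]
  have hGs₂ : ∀ t, b < t → s (X t) (U t) = s (x₂ (t - δ)) (u₂ (t - δ)) := fun t ht => by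
    rw [hX₂ t ht, hU₂ t ht]
  have hXcont : Continuous X := by
    refine Continuous.if_le hx₁ (hx₂.comp (continuous_id.sub continuous_const))
      continuous_id continuous_const ?_
    intro t ht; rw [ht]; exact hbnd
  have hUmeas : Measurable U := by
    refine Measurable.ite (p := fun t => t ≤ b) measurableSet_Iic hu₁
      (hu₂.comp (measurable_id.sub_const δ))
  have hfI : IntervalIntegrable (fun t => f (X t) (U t)) volume a (d + δ) :=
    glue_ii _ hab hcd hδ hf₁ hf₂ hGf₁ hGf₂
  have hsI : IntervalIntegrable (fun t => s (X t) (U t)) volume a (d + δ) :=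
    glue_ii _ hab hcd hδ hs₁ hs₂ hGs₁ hGs₂
  have hXa : X a = x₁ a := hX₁ a hab
  have hdyn : ∀ t ∈ Set.Icc a (d + δ), X t = X a + ∫ τ in a..t, f (X τ) (U τ) := by
    intro t ht
    rcases le_or_gt t b with htb | htb
    · rw [hX₁ t htb, hXa]
      rw [intervalIntegral.integral_congr (g := fun τ => f (x₁ τ) (u₁ τ)) (fun τ hτ => by
        rw [Set.uIcc_of_le ht.1] at hτ
        exact hGf₁ τ (hτ.2.trans htb))]
      exact hdyn₁ t ⟨ht.1, htb⟩
    · rw [hX₂ t htb, hXa]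
      have htd : t - δ ≤ d := by linarith [ht.2]
      have hct : c ≤ t - δ := by rw [← hbc]; linarith
      have hsplit : ∫ τ in a..t, f (X τ) (U τ)
          = (∫ τ in a..b, f (x₁ τ) (u₁ τ)) + ∫ τ in c..(t - δ), f (x₂ τ) (u₂ τ) := by
        have := glue_int (g₁ := fun τ => f (x₁ τ) (u₁ τ)) (g₂ := fun τ => f (x₂ τ) (u₂ τ))
          (fun τ => f (X τ) (U τ)) hab hct hδ hf₁
          (hf₂.mono_set (by
            rw [Set.uIcc_of_le hct, Set.uIcc_of_le hcd]
            exact Set.Icc_subset_Icc le_rfl htd)) hGf₁ hGf₂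
        rw [sub_add_cancel] at this
        exact this
      rw [hsplit]
      have e₁ : x₁ b = x₁ a + ∫ τ in a..b, f (x₁ τ) (u₁ τ) := hdyn₁ b ⟨hab, le_rfl⟩
      have e₂ : x₂ (t - δ) = x₂ c + ∫ τ in c..(t - δ), f (x₂ τ) (u₂ τ) :=
        hdyn₂ (t - δ) ⟨hct, htd⟩
      rw [e₂, ← h, e₁]
      abel
  refine ⟨⟨a, d + δ, hab.trans hbe, X, U, hUmeas, hXcont, hfI, hsI, hdyn⟩, hXa, ?_, ?_⟩
  · show X (d + δ) = x₂ d
    rcases lt_or_ge b (d + δ) with hlt | hle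
    · rw [hX₂ _ hlt]; congr 1; ring
    · have hb : d + δ = b := le_antisymm hle hbe
      have hdc : c = d := by rw [hδdef] at hb; linarith
      rw [hb, hX₁ b le_rfl, hbnd, hbc, hdc]
  · show (∫ t in a..(d + δ), s (X t) (U t)) = _ + _
    have := glue_int (g₁ := fun τ => s (x₁ τ) (u₁ τ)) (g₂ := fun τ => s (x₂ τ) (u₂ τ))
      (fun τ => s (X τ) (U τ)) hab hcd hδ hs₁ hs₂ hGs₁ hGs₂
    rw [this]
    rfl

/-- `F` is a storage function: the dissipation inequality holds along all trajectories. -/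
def IsStorage {n m : ℕ} (f : (Fin n → ℝ) → (Fin m → ℝ) → (Fin n → ℝ))
    (s : (Fin n → ℝ) → (Fin m → ℝ) → ℝ) (F : (Fin n → ℝ) → ℝ) : Prop :=
  ∀ T : Traj f s, F (T.x T.t₂) - F (T.x T.t₁) ≤ T.supply

/-- Cyclo-dissipativity with respect to the ground state `xs`: nonnegative supply along
every trajectory beginning and ending at `xs`. -/
def CycloDissipativeWrt {n m : ℕ} (f : (Fin n → ℝ) → (Fin m → ℝ) → (Fin n → ℝ))
    (s : (Fin n → ℝ) → (Fin m → ℝ) → ℝ) (xs : Fin n → ℝ) : Prop :=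
  ∀ T : Traj f s, T.x T.t₁ = xs → T.x T.t₂ = xs → 0 ≤ T.supply

/-- The set of values `-supply` over trajectories from `x` to `xs`. -/
def Sac {n m : ℕ} (f : (Fin n → ℝ) → (Fin m → ℝ) → (Fin n → ℝ))
    (s : (Fin n → ℝ) → (Fin m → ℝ) → ℝ) (xs x : Fin n → ℝ) : Set ℝ :=
  {r : ℝ | ∃ T : Traj f s, T.x T.t₁ = x ∧ T.x T.t₂ = xs ∧ r = -T.supply}

/-- The set of values `supply` over trajectories from `xs` to `x`. -/
def Src {n m : ℕ} (f : (Fin n → ℝ) → (Fin m → ℝ) → (Fin n → ℝ))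
    (s : (Fin n → ℝ) → (Fin m → ℝ) → ℝ) (xs x : Fin n → ℝ) : Set ℝ :=
  {r : ℝ | ∃ T : Traj f s, T.x T.t₁ = xs ∧ T.x T.t₂ = x ∧ r = T.supply}

/-- If the system is reachable from and controllable to `xs`, and cyclo-lossless with
respect to `xs` (every trajectory beginning and ending at `xs` has zero supply), then
`F_ac = F_rc` everywhere and the storage function is unique up to an additive constant. -/
theorem cycloLosslessWrt_storage_unique {n m : ℕ}
    (f : (Fin n → ℝ) → (Fin m → ℝ) → (Fin n → ℝ))
    (s : (Fin n → ℝ) → (Fin m → ℝ) → ℝ)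
    (hfc : Continuous fun q : (Fin n → ℝ) × (Fin m → ℝ) => f q.1 q.2)
    (hsc : Continuous fun q : (Fin n → ℝ) × (Fin m → ℝ) => s q.1 q.2)
    (xs : Fin n → ℝ)
    (hreach : ∀ x : Fin n → ℝ, ∃ T : Traj f s, T.x T.t₁ = xs ∧ T.x T.t₂ = x)
    (hctrl : ∀ x : Fin n → ℝ, ∃ T : Traj f s, T.x T.t₁ = x ∧ T.x T.t₂ = xs)
    (hloss : ∀ T : Traj f s, T.x T.t₁ = xs → T.x T.t₂ = xs → T.supply = 0) :
    (∀ x, sSup (Sac f s xs x) = sInf (Src f s xs x)) ∧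
    (∀ F₁ F₂ : (Fin n → ℝ) → ℝ, IsStorage f s F₁ → IsStorage f s F₂ →
      ∃ c : ℝ, ∀ x, F₁ x - F₂ x = c) := by
  -- key fact: for any S : xs → x and T : x → xs, S.supply + T.supply = 0
  have key : ∀ (x : Fin n → ℝ) (S T : Traj f s),
      S.x S.t₁ = xs → S.x S.t₂ = x → T.x T.t₁ = x → T.x T.t₂ = xs →
      S.supply + T.supply = 0 := by
    intro x S T hS₁ hS₂ hT₁ hT₂
    obtain ⟨C, hC₁, hC₂, hCsup⟩ := S.concat T (by rw [hS₂, hT₁])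
    rw [← hCsup]
    exact hloss C (by rw [hC₁, hS₁]) (by rw [hC₂, hT₂])
  constructor
  · intro x
    obtain ⟨S₀, hS₀₁, hS₀₂⟩ := hreach x
    obtain ⟨T₀, hT₀₁, hT₀₂⟩ := hctrl x
    have hSac : Sac f s xs x = {S₀.supply} := by
      ext r
      simp only [Sac, Set.mem_setOf_eq, Set.mem_singleton_iff]
      constructor
      · rintro ⟨T, hT₁, hT₂, rfl⟩
        have := key x S₀ T hS₀₁ hS₀₂ hT₁ hT₂
        linarith
      · rintro rfl
        exact ⟨T₀, hT₀₁, hT₀₂, by have := key x S₀ T₀ hS₀₁ hS₀₂ hT₀₁ hT₀₂; linarith⟩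
    have hSrc : Src f s xs x = {S₀.supply} := by
      ext r
      simp only [Src, Set.mem_setOf_eq, Set.mem_singleton_iff]
      constructor
      · rintro ⟨S, hS₁, hS₂, rfl⟩
        have h1 := key x S T₀ hS₁ hS₂ hT₀₁ hT₀₂
        have h2 := key x S₀ T₀ hS₀₁ hS₀₂ hT₀₁ hT₀₂
        linarith
      · rintro rfl
        exact ⟨S₀, hS₀₁, hS₀₂, rfl⟩
    rw [hSac, hSrc, csSup_singleton, csInf_singleton]
  · intro F₁ F₂ h₁ h₂
    refine ⟨F₁ xs - F₂ xs, fun x => ?_⟩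
    obtain ⟨S, hS₁, hS₂⟩ := hreach x
    obtain ⟨T, hT₁, hT₂⟩ := hctrl x
    have hk := key x S T hS₁ hS₂ hT₁ hT₂
    have e : ∀ F : (Fin n → ℝ) → ℝ, IsStorage f s F → F x - F xs = S.supply := by
      intro F hF
      have a1 := hF S
      have a2 := hF T
      rw [hS₁, hS₂] at a1
      rw [hT₁, hT₂] at a2
      linarith
    have e₁ := e F₁ h₁
    have e₂ := e F₂ h₂
    linarith
end

section
/- Assume Σ is reachable from x* and controllable to x*, and cyclo-dissipative with respect to x*. Assume additionally that for every state x there exist a time T_l ≥ 0, τ ∈ [0,T_l], and a trajectory (x_l,u_l) on [0,T_l] with x_l(0) = x_l(T_l) = x*, x_l(τ) = x, whose total supply is zero. Then F_ac(x) = F_rc(x) for all x, the storage function is unique up to an additive constant, and every storage function F satisfies F(x) − F(x*) = ∫_0^τ s(x_l(t),u_l(t)) dt = −∫_τ^{T_l} s(x_l(t),u_l(t)) dt along any such trajectory. -/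
open MeasureTheory

section ConcatHelpers

/-- Piecewise gluing of two functions with a time shift. -/
noncomputable def pcwFun {α : Type*} (c δ : ℝ) (g g' : ℝ → α) : ℝ → α :=
  fun t => if t ≤ c then g t else g' (t + δ)

lemma pcwFun_of_le {α : Type*} {c : ℝ} (δ : ℝ) (g g' : ℝ → α) {t : ℝ} (ht : t ≤ c) :
    pcwFun c δ g g' t = g t := if_pos ht

lemma pcwFun_of_gt {α : Type*} {c : ℝ} (δ : ℝ) (g g' : ℝ → α) {t : ℝ} (ht : c < t) :
    pcwFun c δ g g' t = g' (t + δ) := if_neg (not_le.mpr ht)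

lemma pcw_comp {α β γ : Type*} (φ : α → β → γ) (g g' : ℝ → α) (v v' : ℝ → β) (c δ : ℝ) :
    (fun t => φ (pcwFun c δ g g' t) (pcwFun c δ v v' t))
      = pcwFun c δ (fun t => φ (g t) (v t)) (fun t => φ (g' t) (v' t)) :=
  funext fun t => by by_cases h : t ≤ c <;> simp [pcwFun, h]

variable {E : Type*} [NormedAddCommGroup E]

lemma pcw_intervalIntegrable {G G' : ℝ → E} {a c d e : ℝ} (hac : a ≤ c) (hde : d ≤ e)
    (hG : IntervalIntegrable G volume a c) (hG' : IntervalIntegrable G' volume d e) :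
    IntervalIntegrable (pcwFun c (d - c) G G') volume a (c + (e - d)) := by
  have hce : c ≤ c + (e - d) := by linarith
  refine IntervalIntegrable.trans (b := c) ?_ ?_
  · rw [intervalIntegrable_iff_integrableOn_Ioc_of_le hac] at hG ⊢
    exact hG.congr_fun (fun t ht => (pcwFun_of_le _ _ _ ht.2).symm) measurableSet_Ioc
  · have h2 := hG'.comp_add_right (d - c)
    have hd : d - (d - c) = c := by ring
    have he : e - (d - c) = c + (e - d) := by ring
    rw [hd, he] at h2
    rw [intervalIntegrable_iff_integrableOn_Ioc_of_le hce] at h2 ⊢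
    exact h2.congr_fun (fun t ht => (pcwFun_of_gt _ _ _ ht.1).symm) measurableSet_Ioc

variable [NormedSpace ℝ E]

lemma pcw_integral_left {G G' : ℝ → E} {a b c δ : ℝ} (hac : a ≤ c) (hbc : b ≤ c) :
    (∫ t in a..b, pcwFun c δ G G' t) = ∫ t in a..b, G t := by
  refine intervalIntegral.integral_congr fun t ht => ?_
  exact pcwFun_of_le _ _ _
    ((Set.mem_uIcc.mp ht).elim (fun h => h.2.trans hbc) fun h => h.2.trans hac)

lemma pcw_integral_right {G G' : ℝ → E} {a b c δ : ℝ} (hca : c ≤ a) (hab : a ≤ b) :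
    (∫ t in a..b, pcwFun c δ G G' t) = ∫ t in (a + δ)..(b + δ), G' t := by
  rw [← intervalIntegral.integral_comp_add_right G' δ]
  refine intervalIntegral.integral_congr_ae (Filter.Eventually.of_forall fun t ht => ?_)
  rw [Set.uIoc_of_le hab] at ht
  exact pcwFun_of_gt _ _ _ (lt_of_le_of_lt hca ht.1)

end ConcatHelpers

section TrajHelpers

variable {n m : ℕ} {f : (Fin n → ℝ) → (Fin m → ℝ) → (Fin n → ℝ)}
  {s : (Fin n → ℝ) → (Fin m → ℝ) → ℝ}

/-- Restriction of a trajectory to a subinterval. -/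
def Traj.restrict (T : Traj f s) (a b : ℝ) (ha : T.t₁ ≤ a) (hab : a ≤ b) (hb : b ≤ T.t₂) :
    Traj f s where
  t₁ := a
  t₂ := b
  hle := hab
  x := T.x
  u := T.u
  hu := T.hu
  hx := T.hx
  hf := T.hf.mono_set (by
    rw [Set.uIcc_of_le hab, Set.uIcc_of_le T.hle]; exact Set.Icc_subset_Icc ha hb)
  hs := T.hs.mono_set (by
    rw [Set.uIcc_of_le hab, Set.uIcc_of_le T.hle]; exact Set.Icc_subset_Icc ha hb)
  hdyn := by
    intro t ht
    have h1 := T.hdyn t ⟨ha.trans ht.1, ht.2.trans hb⟩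
    have h2 := T.hdyn a ⟨ha, hab.trans hb⟩
    have hi1 : IntervalIntegrable (fun τ => f (T.x τ) (T.u τ)) volume T.t₁ a :=
      T.hf.mono_set (by
        rw [Set.uIcc_of_le ha, Set.uIcc_of_le T.hle]
        exact Set.Icc_subset_Icc le_rfl (hab.trans hb))
    have hi2 : IntervalIntegrable (fun τ => f (T.x τ) (T.u τ)) volume a t :=
      T.hf.mono_set (by
        rw [Set.uIcc_of_le ht.1, Set.uIcc_of_le T.hle]
        exact Set.Icc_subset_Icc ha (ht.2.trans hb))
    have hadd := intervalIntegral.integral_add_adjacent_intervals hi1 hi2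
    rw [h1, h2, ← hadd]; abel

@[simp] lemma Traj.restrict_t₁ (T : Traj f s) (a b : ℝ) (ha : T.t₁ ≤ a) (hab : a ≤ b)
    (hb : b ≤ T.t₂) : (T.restrict a b ha hab hb).t₁ = a := rfl

@[simp] lemma Traj.restrict_t₂ (T : Traj f s) (a b : ℝ) (ha : T.t₁ ≤ a) (hab : a ≤ b)
    (hb : b ≤ T.t₂) : (T.restrict a b ha hab hb).t₂ = b := rfl

@[simp] lemma Traj.restrict_x (T : Traj f s) (a b : ℝ) (ha : T.t₁ ≤ a) (hab : a ≤ b)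
    (hb : b ≤ T.t₂) : (T.restrict a b ha hab hb).x = T.x := rfl

@[simp] lemma Traj.restrict_supply (T : Traj f s) (a b : ℝ) (ha : T.t₁ ≤ a) (hab : a ≤ b)
    (hb : b ≤ T.t₂) :
    (T.restrict a b ha hab hb).supply = ∫ t in a..b, s (T.x t) (T.u t) := rfl

lemma Traj.supply_split (T : Traj f s) {τ : ℝ} (h1 : T.t₁ ≤ τ) (h2 : τ ≤ T.t₂) :
    T.supply = (∫ t in T.t₁..τ, s (T.x t) (T.u t)) + ∫ t in τ..T.t₂, s (T.x t) (T.u t) := by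
  refine (intervalIntegral.integral_add_adjacent_intervals ?_ ?_).symm
  · exact T.hs.mono_set (by
      rw [Set.uIcc_of_le h1, Set.uIcc_of_le T.hle]; exact Set.Icc_subset_Icc le_rfl h2)
  · exact T.hs.mono_set (by
      rw [Set.uIcc_of_le h2, Set.uIcc_of_le T.hle]; exact Set.Icc_subset_Icc h1 le_rfl)

/-- Concatenation of two trajectories. -/
noncomputable def Traj.concat_s4 (T T' : Traj f s) (h : T.x T.t₂ = T'.x T'.t₁) : Traj f s where
  t₁ := T.t₁
  t₂ := T.t₂ + (T'.t₂ - T'.t₁)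
  hle := by have := T.hle; have := T'.hle; linarith
  x := pcwFun T.t₂ (T'.t₁ - T.t₂) T.x T'.x
  u := pcwFun T.t₂ (T'.t₁ - T.t₂) T.u T'.u
  hu := Measurable.ite measurableSet_Iic T.hu (T'.hu.comp (measurable_add_const _))
  hx := by
    refine Continuous.if_le T.hx (T'.hx.comp (continuous_id.add continuous_const))
      continuous_id continuous_const fun t ht => ?_
    rw [ht, show T.t₂ + (T'.t₁ - T.t₂) = T'.t₁ by ring]
    exact h
  hf := by
    rw [pcw_comp f T.x T'.x T.u T'.u T.t₂ (T'.t₁ - T.t₂)]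
    exact pcw_intervalIntegrable T.hle T'.hle T.hf T'.hf
  hs := by
    rw [pcw_comp s T.x T'.x T.u T'.u T.t₂ (T'.t₁ - T.t₂)]
    exact pcw_intervalIntegrable T.hle T'.hle T.hs T'.hs
  hdyn := by
    intro t ht
    rw [pcwFun_of_le _ _ _ T.hle]
    rw [show (fun τ => f (pcwFun T.t₂ (T'.t₁ - T.t₂) T.x T'.x τ)
          (pcwFun T.t₂ (T'.t₁ - T.t₂) T.u T'.u τ))
        = pcwFun T.t₂ (T'.t₁ - T.t₂) (fun τ => f (T.x τ) (T.u τ))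
            (fun τ => f (T'.x τ) (T'.u τ)) from
      pcw_comp f T.x T'.x T.u T'.u T.t₂ (T'.t₁ - T.t₂)]
    have hint : IntervalIntegrable (pcwFun T.t₂ (T'.t₁ - T.t₂)
        (fun τ => f (T.x τ) (T.u τ)) (fun τ => f (T'.x τ) (T'.u τ))) volume T.t₁
        (T.t₂ + (T'.t₂ - T'.t₁)) := pcw_intervalIntegrable T.hle T'.hle T.hf T'.hf
    by_cases htc : t ≤ T.t₂
    · rw [pcwFun_of_le _ _ _ htc, pcw_integral_left (c := T.t₂) (δ := T'.t₁ - T.t₂) T.hle htc]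
      exact T.hdyn t ⟨ht.1, htc⟩
    · push_neg at htc
      rw [pcwFun_of_gt _ _ _ htc]
      have hmem : t + (T'.t₁ - T.t₂) ∈ Set.Icc T'.t₁ T'.t₂ :=
        ⟨by linarith, by have := ht.2; linarith⟩
      have h2 := T'.hdyn _ hmem
      have hle2 : T.t₁ ≤ T.t₂ + (T'.t₂ - T'.t₁) := by
        have := T.hle; have := T'.hle; linarith
      have hsplit := intervalIntegral.integral_add_adjacent_intervals
        (hint.mono_set (c := T.t₁) (d := T.t₂) (by
          rw [Set.uIcc_of_le T.hle, Set.uIcc_of_le hle2]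
          exact Set.Icc_subset_Icc le_rfl (by have := T'.hle; linarith)))
        (hint.mono_set (c := T.t₂) (d := t) (by
          rw [Set.uIcc_of_le htc.le, Set.uIcc_of_le hle2]
          exact Set.Icc_subset_Icc T.hle ht.2))
      rw [← hsplit, pcw_integral_left (c := T.t₂) (δ := T'.t₁ - T.t₂) T.hle le_rfl,
        pcw_integral_right (c := T.t₂) le_rfl htc.le,
        show T.t₂ + (T'.t₁ - T.t₂) = T'.t₁ by ring, h2, ← h,
        T.hdyn T.t₂ ⟨T.hle, le_rfl⟩]
      abel

lemma Traj.concat_t₁ (T T' : Traj f s) (h : T.x T.t₂ = T'.x T'.t₁) :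
    (T.concat_s4 T' h).t₁ = T.t₁ := rfl

lemma Traj.concat_x_t₁ (T T' : Traj f s) (h : T.x T.t₂ = T'.x T'.t₁) :
    (T.concat_s4 T' h).x (T.concat_s4 T' h).t₁ = T.x T.t₁ := pcwFun_of_le _ _ _ T.hle

lemma Traj.concat_x_t₂ (T T' : Traj f s) (h : T.x T.t₂ = T'.x T'.t₁) :
    (T.concat_s4 T' h).x (T.concat_s4 T' h).t₂ = T'.x T'.t₂ := by
  show pcwFun T.t₂ (T'.t₁ - T.t₂) T.x T'.x (T.t₂ + (T'.t₂ - T'.t₁)) = _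
  rcases eq_or_lt_of_le T'.hle with he | hlt
  · rw [show T.t₂ + (T'.t₂ - T'.t₁) = T.t₂ by rw [← he]; ring,
      pcwFun_of_le _ _ _ le_rfl, h, he]
  · rw [pcwFun_of_gt _ _ _ (by linarith)]
    congr 1
    ring

lemma Traj.concat_supply (T T' : Traj f s) (h : T.x T.t₂ = T'.x T'.t₁) :
    (T.concat_s4 T' h).supply = T.supply + T'.supply := by
  show (∫ t in T.t₁..T.t₂ + (T'.t₂ - T'.t₁),
      s (pcwFun T.t₂ (T'.t₁ - T.t₂) T.x T'.x t) (pcwFun T.t₂ (T'.t₁ - T.t₂) T.u T'.u t)) = _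
  rw [show (fun t => s (pcwFun T.t₂ (T'.t₁ - T.t₂) T.x T'.x t)
        (pcwFun T.t₂ (T'.t₁ - T.t₂) T.u T'.u t))
      = pcwFun T.t₂ (T'.t₁ - T.t₂) (fun t => s (T.x t) (T.u t))
          (fun t => s (T'.x t) (T'.u t)) from
    pcw_comp s T.x T'.x T.u T'.u T.t₂ (T'.t₁ - T.t₂)]
  have hint : IntervalIntegrable (pcwFun T.t₂ (T'.t₁ - T.t₂)
      (fun t => s (T.x t) (T.u t)) (fun t => s (T'.x t) (T'.u t))) volume T.t₁
      (T.t₂ + (T'.t₂ - T'.t₁)) := pcw_intervalIntegrable T.hle T'.hle T.hs T'.hs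
  have hle2 : T.t₁ ≤ T.t₂ + (T'.t₂ - T'.t₁) := by
    have := T.hle; have := T'.hle; linarith
  have hsplit := intervalIntegral.integral_add_adjacent_intervals
    (hint.mono_set (c := T.t₁) (d := T.t₂) (by
      rw [Set.uIcc_of_le T.hle, Set.uIcc_of_le hle2]
      exact Set.Icc_subset_Icc le_rfl (by have := T'.hle; linarith)))
    (hint.mono_set (c := T.t₂) (d := T.t₂ + (T'.t₂ - T'.t₁)) (by
      rw [Set.uIcc_of_le (by have := T'.hle; linarith), Set.uIcc_of_le hle2]
      exact Set.Icc_subset_Icc T.hle le_rfl))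
  rw [← hsplit, pcw_integral_left (c := T.t₂) (δ := T'.t₁ - T.t₂) T.hle le_rfl,
    pcw_integral_right (c := T.t₂) le_rfl (by have := T'.hle; linarith),
    show T.t₂ + (T'.t₁ - T.t₂) = T'.t₁ by ring,
    show T.t₂ + (T'.t₂ - T'.t₁) + (T'.t₁ - T.t₂) = T'.t₂ by ring]
  rfl

end TrajHelpers

/-- Suppose the system is reachable from and controllable to `xs`, cyclo-dissipative with
respect to `xs`, and weakly cyclo-lossless: every state `x` lies on some zero-supply
cyclic trajectory through `xs` on an interval `[0, T_l]`. Then `F_ac = F_rc`, the storage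
function is unique up to an additive constant, and every storage function `F` satisfies
`F x - F xs = ∫_0^τ s dt = -∫_τ^{T_l} s dt` along any such trajectory. -/
theorem weakly_cycloLossless_storage_unique {n m : ℕ}
    (f : (Fin n → ℝ) → (Fin m → ℝ) → (Fin n → ℝ))
    (s : (Fin n → ℝ) → (Fin m → ℝ) → ℝ)
    (hfc : Continuous fun q : (Fin n → ℝ) × (Fin m → ℝ) => f q.1 q.2)
    (hsc : Continuous fun q : (Fin n → ℝ) × (Fin m → ℝ) => s q.1 q.2)
    (xs : Fin n → ℝ)
    (hreach : ∀ x : Fin n → ℝ, ∃ T : Traj f s, T.x T.t₁ = xs ∧ T.x T.t₂ = x)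
    (hctrl : ∀ x : Fin n → ℝ, ∃ T : Traj f s, T.x T.t₁ = x ∧ T.x T.t₂ = xs)
    (hdis : CycloDissipativeWrt f s xs)
    (hweak : ∀ x : Fin n → ℝ, ∃ T : Traj f s, T.t₁ = 0 ∧ T.x 0 = xs ∧ T.x T.t₂ = xs ∧
      (∃ τ ∈ Set.Icc (0 : ℝ) T.t₂, T.x τ = x) ∧ T.supply = 0) :
    (∀ x, sSup (Sac f s xs x) = sInf (Src f s xs x)) ∧
    (∀ F₁ F₂ : (Fin n → ℝ) → ℝ, IsStorage f s F₁ → IsStorage f s F₂ →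
      ∃ c : ℝ, ∀ x, F₁ x - F₂ x = c) ∧
    (∀ F : (Fin n → ℝ) → ℝ, IsStorage f s F →
      ∀ (x : Fin n → ℝ) (T : Traj f s) (τ : ℝ),
        T.t₁ = 0 → T.x 0 = xs → T.x T.t₂ = xs → τ ∈ Set.Icc (0 : ℝ) T.t₂ →
        T.x τ = x → T.supply = 0 →
        F x - F xs = ∫ t in (0:ℝ)..τ, s (T.x t) (T.u t) ∧
        F x - F xs = -∫ t in τ..T.t₂, s (T.x t) (T.u t)) := by
  classical
  -- the key computation: along any zero-supply loop through x, any storage function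
  -- satisfies the stated identities
  have key : ∀ F : (Fin n → ℝ) → ℝ, IsStorage f s F →
      ∀ (x : Fin n → ℝ) (T : Traj f s) (τ : ℝ),
        T.t₁ = 0 → T.x 0 = xs → T.x T.t₂ = xs → τ ∈ Set.Icc (0 : ℝ) T.t₂ →
        T.x τ = x → T.supply = 0 →
        F x - F xs = ∫ t in (0:ℝ)..τ, s (T.x t) (T.u t) ∧
        F x - F xs = -∫ t in τ..T.t₂, s (T.x t) (T.u t) := by
    intro F hF x T τ ht1 hx0 hxT hτ hxτ hsup
    have h1 : T.t₁ ≤ τ := by rw [ht1]; exact hτ.1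
    have h2 : τ ≤ T.t₂ := hτ.2
    set A := ∫ t in (0:ℝ)..τ, s (T.x t) (T.u t) with hA
    set B := ∫ t in τ..T.t₂, s (T.x t) (T.u t) with hB
    have hAB : A + B = 0 := by
      rw [← hsup, T.supply_split h1 h2, ht1]
    have hFa : F x - F xs ≤ A := by
      have h := hF (T.restrict T.t₁ τ (le_refl T.t₁) h1 h2)
      rw [Traj.restrict_supply, Traj.restrict_x, Traj.restrict_t₁, Traj.restrict_t₂, ht1,
        hxτ, hx0] at h
      exact h
    have hFb : F xs - F x ≤ B := by
      have h := hF (T.restrict τ T.t₂ h1 h2 (le_refl T.t₂))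
      rw [Traj.restrict_supply, Traj.restrict_x, Traj.restrict_t₁, Traj.restrict_t₂,
        hxτ, hxT] at h
      exact h
    constructor
    · linarith
    · linarith
  refine ⟨?_, ?_, key⟩
  · -- F_ac = F_rc
    intro x
    obtain ⟨T, ht1, hx0, hxT, ⟨τ, hτ, hxτ⟩, hsup⟩ := hweak x
    have h1 : T.t₁ ≤ τ := by rw [ht1]; exact hτ.1
    have h2 : τ ≤ T.t₂ := hτ.2
    set A := ∫ t in T.t₁..τ, s (T.x t) (T.u t) with hA
    set B := ∫ t in τ..T.t₂, s (T.x t) (T.u t) with hB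
    have hAB : A + B = 0 := by rw [← hsup, T.supply_split h1 h2]
    -- the two halves of the loop
    have hT1 : (A : ℝ) ∈ Src f s xs x := by
      refine ⟨T.restrict T.t₁ τ (le_refl T.t₁) h1 h2, ?_, ?_, ?_⟩
      · rw [Traj.restrict_x, Traj.restrict_t₁, ht1]; exact hx0
      · rw [Traj.restrict_x, Traj.restrict_t₂]; exact hxτ
      · rw [Traj.restrict_supply, ← hA]
    have hT2 : (A : ℝ) ∈ Sac f s xs x := by
      refine ⟨T.restrict τ T.t₂ h1 h2 (le_refl T.t₂), ?_, ?_, ?_⟩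
      · rw [Traj.restrict_x, Traj.restrict_t₁]; exact hxτ
      · rw [Traj.restrict_x, Traj.restrict_t₂]; exact hxT
      · rw [Traj.restrict_supply, ← hB]; linarith
    -- every element of Sac is at most every element of Src
    have hbound : ∀ r ∈ Sac f s xs x, ∀ r' ∈ Src f s xs x, r ≤ r' := by
      rintro r ⟨Ta, ha1, ha2, rfl⟩ r' ⟨Tr, hr1, hr2, rfl⟩
      have hglue : Tr.x Tr.t₂ = Ta.x Ta.t₁ := by rw [hr2, ha1]
      have := hdis (Tr.concat_s4 Ta hglue)
        (by rw [Tr.concat_x_t₁]; exact hr1)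
        (by rw [Tr.concat_x_t₂]; exact ha2)
      rw [Tr.concat_supply Ta hglue] at this
      linarith
    have hub : ∀ r ∈ Sac f s xs x, r ≤ A := fun r hr => hbound r hr A hT1
    have hlb : ∀ r' ∈ Src f s xs x, A ≤ r' := fun r' hr' => hbound A hT2 r' hr'
    have hs1 : sSup (Sac f s xs x) = A :=
      le_antisymm (csSup_le ⟨A, hT2⟩ hub) (le_csSup ⟨A, hub⟩ hT2)
    have hs2 : sInf (Src f s xs x) = A :=
      le_antisymm (csInf_le ⟨A, hlb⟩ hT1) (le_csInf ⟨A, hT1⟩ hlb)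
    rw [hs1, hs2]
  · -- uniqueness up to an additive constant
    intro F₁ F₂ hF₁ hF₂
    refine ⟨F₁ xs - F₂ xs, fun x => ?_⟩
    obtain ⟨T, ht1, hx0, hxT, ⟨τ, hτ, hxτ⟩, hsup⟩ := hweak x
    have k1 := (key F₁ hF₁ x T τ ht1 hx0 hxT hτ hxτ hsup).1
    have k2 := (key F₂ hF₂ x T τ ht1 hx0 hxT hτ hxτ hsup).1
    linarith
end
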